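/- arXiv:1709.06543 — 2 statements merged into one kernel-verified Lean document; each statement's English description precedes it below -/
import Mathlib

section
/- Let $A$ be a commutative ring with $2$ invertible, $B$ a finite $A$-algebra such that $B$ is finitely generated projective as an $A$-module, and $q \in (B[\lambda])^\times$ an invertible element of $B \otimes_A A[\lambda]$ defining a family of rank-one quadratic forms on $B$ over the affine line. Then the quadratic spaces $(B, q_0)$ and $(B, q_1)$ over $A$ obtained by evaluating at $\lambda = 0$ and $\lambda = 1$ are isometric, where $(B, q_i)$ denotes $B$ with symmetric bilinear form $(a, b) \mapsto \tau(q_i \cdot a b)$ for any fixed $A$-linear functional $\tau : B \to A$ inducing nondegenerate forms. -/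
open Polynomial

private lemma sqrt_one_add_aux {R : Type*} [CommRing R] [Invertible (2 : R)] (k : ℕ) :
    ∀ x : R, x ^ k = 0 → ∃ u : R, IsUnit u ∧ u ^ 2 = 1 + x := by
  induction k using Nat.strong_induction_on with
  | _ k ih =>
    intro x hx
    match k, hx with
    | 0, hx =>
      simp only [pow_zero] at hx
      have hx0 : x = 0 := by calc x = x * 1 := by ring
                                  _ = 0 := by rw [hx]; ring
      exact ⟨1, isUnit_one, by rw [hx0]; ring⟩
    | 1, hx =>
      simp only [pow_one] at hx
      exact ⟨1, isUnit_one, by rw [hx]; ring⟩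
    | (k+2), hx =>
      set y : R := 1 + ⅟2 * x with hy
      have hnx : IsNilpotent (⅟2 * x) :=
        Commute.isNilpotent_mul_left (Commute.all _ _) ⟨k + 2, hx⟩
      have hyu : IsUnit y := hnx.isUnit_one_add
      obtain ⟨Y, hY⟩ := hyu
      have hYinv : (Y : R) * ((Y⁻¹ : Rˣ) : R) = 1 := by
        norm_cast; exact Y.mul_inv
      set z : R := (1 + x) * ((Y⁻¹ : Rˣ) : R) ^ 2 - 1 with hz
      have hyz : (1 + x) - y ^ 2 = -(⅟2 * x) ^ 2 := by
        rw [hy]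
        linear_combination (-x) * (mul_invOf_self (2 : R))
      have hy1 : y * ((Y⁻¹ : Rˣ) : R) = 1 := hY ▸ hYinv
      have hzc : z = x ^ 2 * (-(⅟2 : R) ^ 2 * ((Y⁻¹ : Rˣ) : R) ^ 2) := by
        rw [hz]
        linear_combination ((Y⁻¹ : Rˣ) : R) ^ 2 * hyz +
          (y * ((Y⁻¹ : Rˣ) : R) + 1) * hy1
      set m : ℕ := (k + 3) / 2 with hm
      have hmlt : m < k + 2 := by omega
      have h2m : k + 2 ≤ 2 * m := by omega
      have hzm : z ^ m = 0 := by
        rw [hzc, mul_pow, ← pow_mul,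
          show 2 * m = (k + 2) + (2 * m - (k + 2)) from by omega, pow_add, hx]
        ring
      obtain ⟨v, hvu, hv2⟩ := ih m hmlt z hzm
      refine ⟨y * v, (hY ▸ Y.isUnit).mul hvu, ?_⟩
      have : (y * v) ^ 2 = y ^ 2 * (1 + z) := by rw [mul_pow, hv2]
      rw [this, hz]
      linear_combination ((1 + x) * (y * ((Y⁻¹ : Rˣ) : R) + 1)) * hy1

/-- Rigidity of rank-one quadratic forms along the affine line: let `A` be a commutative
ring with `2` invertible, `B` a finite `A`-algebra which is finitely generated projective
as an `A`-module, and `q ∈ (B[λ])ˣ` an invertible element of `B[λ]`, viewed as a family of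
rank-one quadratic forms on `B` over `𝔸¹`.  Fix an `A`-linear functional `τ : B → A`
inducing nondegenerate forms for the evaluations `q₀ = q(0)` and `q₁ = q(1)`.  Then the
quadratic spaces `(B, (a,b) ↦ τ(q₀ a b))` and `(B, (a,b) ↦ τ(q₁ a b))` are isometric. -/
theorem rank_one_forms_rigid_along_affine_line
    (A : Type) [CommRing A] [Invertible (2 : A)]
    (B : Type) [CommRing B] [Algebra A B]
    [Module.Finite A B] [Module.Projective A B]
    (q : (Polynomial B)ˣ)
    (τ : B →ₗ[A] A)
    (hτ0 : Function.Bijective fun a : B =>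
      τ ∘ₗ LinearMap.mul A B ((q : Polynomial B).eval 0 * a))
    (hτ1 : Function.Bijective fun a : B =>
      τ ∘ₗ LinearMap.mul A B ((q : Polynomial B).eval 1 * a)) :
    ∃ σ : B ≃ₗ[A] B, ∀ a b : B,
      τ ((q : Polynomial B).eval 0 * σ a * σ b)
        = τ ((q : Polynomial B).eval 1 * a * b) := by
  classical
  have h2B : Invertible (2 : B) := by
    have := Invertible.map (algebraMap A B) (2 : A)
    rwa [map_ofNat] at this
  set p : Polynomial B := (q : Polynomial B) with hp
  -- q₀ is a unit
  have hq0 : IsUnit (p.eval 0) := by simpa using q.isUnit.map (evalRingHom (0 : B))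
  obtain ⟨U, hU⟩ := hq0
  -- the difference q₁ - q₀ is nilpotent
  have hcoeff : ∀ i, i ≠ 0 → IsNilpotent (p.coeff i) :=
    (Polynomial.isUnit_iff_coeff_isUnit_isNilpotent.mp q.isUnit).2
  have hnilp : IsNilpotent (p - C (p.coeff 0)) := by
    rw [Polynomial.isNilpotent_iff]
    intro i
    rcases eq_or_ne i 0 with rfl | hi
    · simp
    · simpa [coeff_C, hi] using hcoeff i hi
  have hdiff : IsNilpotent (p.eval 1 - p.eval 0) := by
    have h0 : p.eval 0 = p.coeff 0 := (Polynomial.coeff_zero_eq_eval_zero p).symm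
    have := hnilp.map (evalRingHom (1 : B))
    simpa [h0] using this
  -- x := q₁ / q₀ - 1 is nilpotent
  set x : B := (p.eval 1 - p.eval 0) * ((U⁻¹ : Bˣ) : B) with hxdef
  have hxnil : IsNilpotent x :=
    Commute.isNilpotent_mul_right (Commute.all _ _) hdiff
  obtain ⟨k, hk⟩ := hxnil
  obtain ⟨u, huu, hu2⟩ := sqrt_one_add_aux k x hk
  have hUinv : (U : B) * ((U⁻¹ : Bˣ) : B) = 1 := by norm_cast; exact U.mul_inv
  -- key identity : q₀ * u² = q₁
  have h1 : p.eval 0 * ((U⁻¹ : Bˣ) : B) = 1 := hU ▸ hUinv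
  have hkey : p.eval 0 * u ^ 2 = p.eval 1 := by
    rw [hu2, hxdef]
    linear_combination (p.eval 1 - p.eval 0) * h1
  obtain ⟨V, hV⟩ := huu
  -- σ = multiplication by u
  refine ⟨LinearEquiv.ofLinear (LinearMap.mul A B u) (LinearMap.mul A B ((V⁻¹ : Bˣ) : B))
      ?_ ?_, ?_⟩
  · ext b
    simp [LinearMap.mul_apply', ← mul_assoc, hV ▸ V.mul_inv]
  · ext b
    simp [LinearMap.mul_apply', ← mul_assoc, hV ▸ V.inv_mul]
  · intro a b
    simp only [LinearEquiv.ofLinear_apply, LinearMap.mul_apply']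
    congr 1
    calc p.eval 0 * (u * a) * (u * b) = p.eval 0 * u ^ 2 * (a * b) := by ring
      _ = p.eval 1 * a * b := by rw [hkey]; ring
end

section
/- Let $k$ be a field, $X$ a $k$-scheme with coordinate ring $k[X]$, and let $P$ be a module over $k[X](t)(u)$ (functions on $X \times \mathbb{G}_m \times \mathbb{G}_m$) that is finitely generated projective of constant rank $r$ over $k[X](t) = k[X \times \mathbb{G}_m]$, and on which multiplication by $u$ is invertible. Let $p(x) = x^r + b_{r-1}x^{r-1} + \cdots + b_0 \in k[X](t)[x]$ be the characteristic polynomial of multiplication by $u$. Then there exist integers $N$ and $M$ such that for all $n > N$, the element $\det_P(t^n - u) = p(t^n) \in k[X](t)$ equals $t^{-M} \cdot (t^m + a_{m-1}t^{m-1} + \cdots + a_0)$ where $m = rn + M$, the $a_i \in k[X]$, and $a_0 \in k[X]^\times$ is invertible. -/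
open Polynomial LaurentPolynomial

/-- Units of the Laurent polynomial ring over a domain are `c·Tᵉ` with `c` a unit. -/
lemma laurent_isUnit_exists {A : Type} [CommRing A] [IsDomain A] {w : LaurentPolynomial A}
    (hw : IsUnit w) : ∃ (c : A) (e : ℤ), IsUnit c ∧ w = AddMonoidAlgebra.single e c := by
  obtain ⟨v, hv⟩ := hw.exists_right_inv
  obtain ⟨nf, f, hf⟩ := exists_T_pow w
  obtain ⟨ng, g, hg⟩ := exists_T_pow v
  have hf0 : f ≠ 0 := by
    rw [← Polynomial.toLaurent_ne_zero, hf]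
    exact (hw.mul (isUnit_T (nf : ℤ))).ne_zero
  have hg0 : g ≠ 0 := by
    rw [← Polynomial.toLaurent_ne_zero, hg]
    have hv' : IsUnit v := IsUnit.of_mul_eq_one w (by rw [mul_comm]; exact hv)
    exact (hv'.mul (isUnit_T (ng : ℤ))).ne_zero
  have hfg : f * g = X ^ (nf + ng) := by
    apply Polynomial.toLaurent_injective
    rw [map_mul, hf, hg, Polynomial.toLaurent_X_pow, mul_mul_mul_comm, hv, one_mul, ← T_add]
    push_cast
    ring_nf
  have hdeg : f.natDegree + g.natDegree = nf + ng := by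
    rw [← Polynomial.natDegree_mul hf0 hg0, hfg, Polynomial.natDegree_X_pow]
  have htdeg : f.natTrailingDegree + g.natTrailingDegree = nf + ng := by
    rw [← Polynomial.natTrailingDegree_mul hf0 hg0, hfg, Polynomial.natTrailingDegree_X_pow]
  have h1 : f.natTrailingDegree = f.natDegree := by
    have h2 := Polynomial.natTrailingDegree_le_natDegree f
    have h3 := Polynomial.natTrailingDegree_le_natDegree g
    omega
  have hcu : IsUnit (f.coeff f.natDegree) := by
    apply IsUnit.of_mul_eq_one (g.coeff g.natDegree)
    have : f.leadingCoeff * g.leadingCoeff = 1 := by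
      rw [← Polynomial.leadingCoeff_mul, hfg, Polynomial.leadingCoeff_X_pow]
    rwa [Polynomial.leadingCoeff, Polynomial.leadingCoeff] at this
  have hfm : f = Polynomial.monomial f.natDegree (f.coeff f.natDegree) := by
    ext i
    rcases eq_or_ne i f.natDegree with h | h
    · simp [h, Polynomial.coeff_monomial]
    · rw [Polynomial.coeff_monomial, if_neg (Ne.symm h)]
      rcases lt_or_gt_of_ne h with h' | h'
      · exact Polynomial.coeff_eq_zero_of_lt_natTrailingDegree (h1 ▸ h')
      · exact Polynomial.coeff_eq_zero_of_natDegree_lt h'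
  refine ⟨f.coeff f.natDegree, (f.natDegree : ℤ) - nf, hcu, ?_⟩
  have hw' : w = Polynomial.toLaurent f * T (-(nf : ℤ)) := by
    rw [hf, mul_T_assoc, add_neg_cancel, T_zero, mul_one]
  have hTf : Polynomial.toLaurent f = LaurentPolynomial.C (f.coeff f.natDegree) *
      T (f.natDegree : ℤ) := by
    conv_lhs => rw [hfm]
    rw [← Polynomial.C_mul_X_pow_eq_monomial, Polynomial.toLaurent_C_mul_X_pow]
  rw [hw', hTf, single_eq_C_mul_T, mul_T_assoc, sub_eq_add_neg]

set_option maxHeartbeats 1000000 in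
/-- Suslin-type lemma on `det_P(tⁿ - u)`: let `A = k[X]` (a domain) over a field `k`, let
`R = A[t,t⁻¹]` and `S = R[u,u⁻¹]` be the rings of functions on `X × 𝔾ₘ` and
`X × 𝔾ₘ × 𝔾ₘ`, and let `P` be an `S`-module which is finite free of rank `r` over `R`
and on which multiplication by `u` is invertible.  Let `p` be the characteristic
polynomial of multiplication by `u` over `R`.  Then there are `N : ℕ` and `M : ℤ` such
that for all `n > N`, `det_P(tⁿ - u) = p(tⁿ) = t⁻ᴹ·(tᵐ + a_{m-1}tᵐ⁻¹ + ⋯ + a₀)` with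
`m = r·n + M`, the `aᵢ ∈ A`, and `a₀ ∈ A` invertible. -/
theorem det_tn_sub_u_eventually_monic
    (k : Type) [Field k] (A : Type) [CommRing A] [IsDomain A] [Algebra k A]
    (r : ℕ)
    (P : Type) [AddCommGroup P]
    [Module (LaurentPolynomial (LaurentPolynomial A)) P]
    [Module (LaurentPolynomial A) P]
    [IsScalarTower (LaurentPolynomial A) (LaurentPolynomial (LaurentPolynomial A)) P]
    [Module.Free (LaurentPolynomial A) P] [Module.Finite (LaurentPolynomial A) P]
    (hr : Module.finrank (LaurentPolynomial A) P = r)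
    (hu : Function.Bijective
      ((LinearMap.lsmul (LaurentPolynomial (LaurentPolynomial A)) P
          (LaurentPolynomial.T 1)).restrictScalars (LaurentPolynomial A))) :
    ∃ (N : ℕ) (M : ℤ), ∀ n : ℕ, n > N →
      ∃ q : Polynomial A,
        q.Monic ∧
        (q.natDegree : ℤ) = (r : ℤ) * n + M ∧
        IsUnit (q.coeff 0) ∧
        Polynomial.eval (LaurentPolynomial.T (n : ℤ))
            (LinearMap.charpoly
              ((LinearMap.lsmul (LaurentPolynomial (LaurentPolynomial A)) P
                  (LaurentPolynomial.T 1)).restrictScalars (LaurentPolynomial A)))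
          = LaurentPolynomial.T (-M) * Polynomial.toLaurent q := by
  set f := (LinearMap.lsmul (LaurentPolynomial (LaurentPolynomial A)) P
      (LaurentPolynomial.T 1)).restrictScalars (LaurentPolynomial A) with hf
  set p := LinearMap.charpoly f with hp
  have hpm : p.Monic := LinearMap.charpoly_monic f
  have hdeg : p.natDegree = r := by rw [hp, LinearMap.charpoly_natDegree, hr]
  -- the constant coefficient of the char poly is a unit
  have hunit : IsUnit (p.coeff 0) := by
    have hdet : IsUnit (LinearMap.det f) := by
      have h := LinearEquiv.isUnit_det' (LinearEquiv.ofBijective f hu)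
      have hco : (↑(LinearEquiv.ofBijective f hu) :
          P →ₗ[LaurentPolynomial A] P) = f := rfl
      rwa [hco] at h
    rw [LinearMap.det_eq_sign_charpoly_coeff, hr] at hdet
    exact (IsUnit.mul_iff.mp hdet).2
  obtain ⟨c, e₀, hcu, hc⟩ := laurent_isUnit_exists hunit
  have hc0 : c ≠ 0 := hcu.ne_zero
  -- dispose of the degenerate case r = 0
  rcases Nat.eq_zero_or_pos r with hr0 | hr1
  · subst hr0
    have hp1 : p = 1 := hpm.natDegree_eq_zero.mp hdeg
    refine ⟨0, 0, fun n _ => ⟨1, monic_one, by simp, by simp, ?_⟩⟩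
    rw [hp1]
    simp
  -- the bound B on the supports of the coefficients of p
  set B : ℕ := (Finset.range (r + 1)).sup
      (fun i => (p.coeff i).coeff.support.sup Int.natAbs) with hBdef
  have hB : ∀ i ∈ Finset.range (r + 1), ∀ j : ℤ, (B : ℤ) < |j| → (p.coeff i).coeff j = 0 := by
    intro i hi j hj
    by_contra h
    have hjs : j ∈ (p.coeff i).coeff.support := Finsupp.mem_support_iff.2 h
    have h1 : j.natAbs ≤ (p.coeff i).coeff.support.sup Int.natAbs := Finset.le_sup hjs
    have h2 : (p.coeff i).coeff.support.sup Int.natAbs ≤ B := Finset.le_sup (f := fun i =>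
      (p.coeff i).coeff.support.sup Int.natAbs) hi
    rw [Int.abs_eq_natAbs] at hj
    omega
  set M : ℤ := -e₀ with hMdef
  have hMB : -(B : ℤ) ≤ M ∧ M ≤ (B : ℤ) := by
    have he : e₀ ∈ (p.coeff 0).coeff.support := by
      rw [hc, AddMonoidAlgebra.coeff_single, Finsupp.support_single_ne_zero _ hc0]
      exact Finset.mem_singleton_self e₀
    have h1 : e₀.natAbs ≤ (p.coeff 0).coeff.support.sup Int.natAbs := Finset.le_sup he
    have h2 : (p.coeff 0).coeff.support.sup Int.natAbs ≤ B := Finset.le_sup (f := fun i =>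
      (p.coeff i).coeff.support.sup Int.natAbs) (Finset.mem_range.mpr (by omega))
    omega
  refine ⟨2 * B + 1, M, fun n hn => ?_⟩
  have hn' : 2 * (B : ℤ) + 2 ≤ (n : ℤ) := by exact_mod_cast hn
  have hrn : (n : ℤ) ≤ (r : ℤ) * n := by
    have h1 : (1 : ℤ) ≤ (r : ℤ) := by exact_mod_cast hr1
    nlinarith
  set m : ℤ := (r : ℤ) * n + M with hmdef
  have hm_pos : 0 < m := by
    rw [hmdef]
    linarith [hMB.1]
  set m' : ℕ := m.toNat with hm'def
  have hm' : (m' : ℤ) = m := Int.toNat_of_nonneg hm_pos.le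
  -- the Laurent polynomial L = T^M * p(T^n)
  set L : LaurentPolynomial A := ∑ i ∈ Finset.range (r + 1),
      p.coeff i * T ((i : ℤ) * n + M) with hLdef
  have hTL : T M * Polynomial.eval (T (n : ℤ)) p = L := by
    rw [Polynomial.eval_eq_sum_range, hdeg, Finset.mul_sum, hLdef]
    refine Finset.sum_congr rfl fun i _ => ?_
    rw [T_pow, T_mul, mul_assoc, ← T_add]
  have key : ∀ (g : LaurentPolynomial A) (s j : ℤ),
      (g * T s : LaurentPolynomial A).coeff j = g.coeff (j - s) := by
    intro g s j
    have h := AddMonoidAlgebra.coeff_mul_single_apply g (1 : A) s j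
    simp only [mul_one, sub_eq_add_neg] at h ⊢
    exact h
  have hLj : ∀ j : ℤ, L.coeff j = ∑ i ∈ Finset.range (r + 1),
      (p.coeff i).coeff (j - ((i : ℤ) * n + M)) := by
    intro j
    rw [hLdef, AddMonoidAlgebra.coeff_sum, Finsupp.finset_sum_apply]
    exact Finset.sum_congr rfl fun i _ => key _ _ _
  have hcr : p.coeff r = 1 := by rw [← hdeg]; exact hpm.coeff_natDegree
  have hone : ∀ j : ℤ, (1 : LaurentPolynomial A).coeff j = if j = 0 then 1 else 0 := by
    intro j
    rw [← single_zero_one_eq_one, AddMonoidAlgebra.coeff_single, Finsupp.single_apply]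
    simp [eq_comm]
  -- top coefficient
  have hLtop : L.coeff m = 1 := by
    rw [hLj]
    rw [Finset.sum_eq_single_of_mem r (Finset.self_mem_range_succ r)]
    · have h0 : m - ((r : ℤ) * n + M) = 0 := by rw [hmdef]; ring
      rw [h0, hcr, hone]
      simp
    · intro i hi hine
      apply hB i hi
      have hilt : i < r := by
        rw [Finset.mem_range] at hi; omega
      have h1 : (n : ℤ) ≤ ((r : ℤ) - i) * n := by
        have : (1 : ℤ) ≤ (r : ℤ) - i := by
          have : (i : ℤ) < r := by exact_mod_cast hilt
          omega
        nlinarith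
      have h2 : m - ((i : ℤ) * n + M) = ((r : ℤ) - i) * n := by rw [hmdef]; ring
      rw [h2, abs_of_pos (by linarith)]
      linarith
  -- bottom coefficient
  have hLbot : L.coeff 0 = c := by
    rw [hLj]
    rw [Finset.sum_eq_single_of_mem 0 (Finset.mem_range.mpr (by omega))]
    · rw [hc]
      have : (0 : ℤ) - ((0 : ℕ) * (n : ℤ) + M) = e₀ := by push_cast; omega
      rw [this, AddMonoidAlgebra.coeff_single, Finsupp.single_eq_same]
    · intro i hi hine
      apply hB i hi
      have h1 : (n : ℤ) ≤ (i : ℤ) * n := by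
        have : (1 : ℤ) ≤ (i : ℤ) := by exact_mod_cast Nat.one_le_iff_ne_zero.mpr hine
        nlinarith
      rw [abs_of_neg (by omega)]
      omega
  -- support bound
  have hsupp : ∀ j ∈ L.coeff.support, 0 ≤ j ∧ j ≤ m := by
    intro j hj
    rw [Finsupp.mem_support_iff, hLj] at hj
    obtain ⟨i, hi, hine⟩ := Finset.exists_ne_zero_of_sum_ne_zero hj
    constructor
    · by_contra hj0
      apply hine
      rcases Nat.eq_zero_or_pos i with hi0 | hi1
      · subst hi0
        rw [hc, AddMonoidAlgebra.coeff_single]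
        apply Finsupp.single_eq_of_ne
        push_cast
        omega
      · apply hB i hi
        have h1 : (n : ℤ) ≤ (i : ℤ) * n := by
          have : (1 : ℤ) ≤ (i : ℤ) := by exact_mod_cast hi1
          nlinarith
        rw [abs_of_neg (by omega)]
        omega
    · by_contra hjm
      apply hine
      rcases eq_or_ne i r with hir | hir
      · subst hir
        rw [hcr, hone, if_neg (by omega)]
      · have hilt : i < r := by
          rw [Finset.mem_range] at hi; omega
        apply hB i hi
        have h1 : ((i : ℤ) + 1) * n ≤ (r : ℤ) * n := by
          have : (i : ℤ) + 1 ≤ (r : ℤ) := by exact_mod_cast hilt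
          exact mul_le_mul_of_nonneg_right this (by positivity)
        rw [abs_of_pos (by nlinarith)]
        nlinarith
  -- the polynomial q
  set q : Polynomial A := ∑ j ∈ Finset.range (m' + 1),
      Polynomial.monomial j (L.coeff j) with hqdef
  have hqco : ∀ jj : ℕ, jj ≤ m' → q.coeff jj = L.coeff jj := by
    intro jj hjj
    rw [hqdef, Polynomial.finset_sum_coeff]
    rw [Finset.sum_eq_single jj]
    · simp [Polynomial.coeff_monomial]
    · intro b _ hb
      rw [Polynomial.coeff_monomial, if_neg hb]
    · intro hmem
      exact absurd (Finset.mem_range.mpr (by omega)) hmem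
  have hcoem : q.coeff m' = 1 := by
    rw [hqco m' le_rfl, hm', hLtop]
  have hqd : q.natDegree ≤ m' := by
    apply Polynomial.natDegree_sum_le_of_forall_le
    intro j hj
    refine le_trans (Polynomial.natDegree_monomial_le _) ?_
    rw [Finset.mem_range] at hj; omega
  have hqmonic : q.Monic := Polynomial.monic_of_natDegree_le_of_coeff_eq_one m' hqd hcoem
  have hqdeg : q.natDegree = m' :=
    le_antisymm hqd (Polynomial.le_natDegree_of_ne_zero (by rw [hcoem]; exact one_ne_zero))
  have hq0 : q.coeff 0 = c := by
    have := hqco 0 (by omega)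
    rwa [Nat.cast_zero, hLbot] at this
  -- toLaurent q = L
  have hTQ : Polynomial.toLaurent q = L := by
    rw [hqdef, map_sum]
    have h1 : ∀ j : ℕ, Polynomial.toLaurent (Polynomial.monomial j (L.coeff j))
        = AddMonoidAlgebra.single (j : ℤ) (L.coeff j) := by
      intro j
      rw [← Polynomial.C_mul_X_pow_eq_monomial, Polynomial.toLaurent_C_mul_X_pow,
        single_eq_C_mul_T]
    rw [Finset.sum_congr rfl fun j _ => h1 j]
    have h2 : ∑ j ∈ Finset.range (m' + 1), AddMonoidAlgebra.single ((j : ℕ) : ℤ) (L.coeff j)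
        = ∑ a ∈ (Finset.range (m' + 1)).image (Nat.cast : ℕ → ℤ),
            AddMonoidAlgebra.single a (L.coeff a) := by
      rw [Finset.sum_image (fun x _ y _ h => Nat.cast_injective h)]
    rw [h2]
    rw [← Finset.sum_subset (s₁ := L.coeff.support)
      (h := fun a ha => ?_) (hf := fun a _ ha => by
        rw [Finsupp.notMem_support_iff.mp ha, AddMonoidAlgebra.single_zero])]
    · exact AddMonoidAlgebra.sum_coeff_single L
    · obtain ⟨h0, hm⟩ := hsupp a ha
      rw [Finset.mem_image]
      exact ⟨a.toNat, Finset.mem_range.mpr (by omega), by omega⟩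
  refine ⟨q, hqmonic, by rw [hqdeg, hm'], by rw [hq0]; exact hcu, ?_⟩
  rw [hTQ, ← hTL, ← mul_assoc, ← T_add, neg_add_cancel, T_zero, one_mul]
end
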